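/- Let 0 < a < b, μ_1 ≥ μ_2 > 0, and λ(n) = a for n even, λ(n) = b for n odd. With Z_n ~ geom_n(μ_1/μ_2), one has liminf_n λ(n) = a and limsup_n E[λ(Z_n)] = (μ_1 b + μ_2 a)/(μ_1 + μ_2); in particular a < limsup_n E[λ(Z_n)]. -/

import Mathlib

open Filter Finset

/-- Alternating input rates `λ = a, b, a, b, …` with `μ₁ ≥ μ₂`: `liminf λ = a` while
`limsup E[λ(Zₙ)] = (μ₁ b + μ₂ a)/(μ₁ + μ₂) > a`. -/
theorem stmt_17 (a b mu1 mu2 : ℝ) (ha : 0 < a) (hab : a < b)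
    (hmu2 : 0 < mu2) (hmu : mu2 ≤ mu1)
    (lam : ℕ → ℝ) (hlam : ∀ n, lam n = if Even n then a else b) :
    liminf lam atTop = a ∧
    limsup (fun n =>
        (∑ j ∈ range (n + 1), lam j * (mu1 / mu2) ^ j) /
          (∑ j ∈ range (n + 1), (mu1 / mu2) ^ j)) atTop
      = (mu1 * b + mu2 * a) / (mu1 + mu2) ∧
    a < limsup (fun n =>
        (∑ j ∈ range (n + 1), lam j * (mu1 / mu2) ^ j) /
          (∑ j ∈ range (n + 1), (mu1 / mu2) ^ j)) atTop := by
  set r := mu1 / mu2 with hrdef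
  have hr : 1 ≤ r := (one_le_div hmu2).mpr hmu
  have hr0 : 0 < r := lt_of_lt_of_le one_pos hr
  have h1r : 0 < 1 + r := by linarith
  set L := (a + b * r) / (1 + r) with hLdef
  have hL1 : a + b * r = L * (1 + r) := (div_mul_cancel₀ _ h1r.ne').symm
  have haL : a < L := by
    rw [hLdef, lt_div_iff₀ h1r]; nlinarith
  have key : ∀ n : ℕ, a * r ^ n + b * r ^ (n + 1) = L * (r ^ n + r ^ (n + 1)) := by
    intro n; linear_combination (r ^ n) * hL1
  have hlamA : ∀ n, lam (2 * n) = a := by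
    intro n; rw [hlam, if_pos ⟨n, by ring⟩]
  have hlamB : ∀ n, lam (2 * n + 1) = b := by
    intro n; rw [hlam, if_neg (by rw [Nat.even_iff]; omega)]
  have hD : ∀ n : ℕ, 0 < ∑ j ∈ range (n + 1), r ^ j := fun n =>
    Finset.sum_pos (fun j _ => pow_pos hr0 j) nonempty_range_add_one
  have hodd : ∀ m : ℕ, ∑ j ∈ range (2 * m + 2), lam j * r ^ j
      = L * ∑ j ∈ range (2 * m + 2), r ^ j := by
    intro m
    induction m with
    | zero =>
      have e0 : lam 0 = a := by simpa using hlamA 0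
      have e1 : lam 1 = b := by simpa using hlamB 0
      simp [Finset.sum_range_succ, e0, e1]
      linear_combination hL1
    | succ k ih =>
      have e : 2 * (k + 1) + 2 = (2 * k + 2) + 1 + 1 := by ring
      rw [e, Finset.sum_range_succ, Finset.sum_range_succ,
        Finset.sum_range_succ (fun j => r ^ j), Finset.sum_range_succ (fun j => r ^ j), ih]
      have ea : lam (2 * k + 2) = a := by
        have := hlamA (k + 1); rwa [show 2 * (k + 1) = 2 * k + 2 by ring] at this
      have eb : lam (2 * k + 2 + 1) = b := by
        have := hlamB (k + 1); rwa [show 2 * (k + 1) + 1 = 2 * k + 2 + 1 by ring] at this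
      rw [ea, eb]
      linear_combination (r ^ (2 * k + 2)) * hL1
  have hle : ∀ n : ℕ, ∑ j ∈ range (n + 1), lam j * r ^ j
      ≤ L * ∑ j ∈ range (n + 1), r ^ j := by
    intro n
    rcases Nat.even_or_odd n with ⟨m, hm⟩ | ⟨m, hm⟩
    · -- n = 2m even
      rcases Nat.eq_zero_or_pos m with rfl | hmpos
      · simp at hm; subst hm
        have e0 : lam 0 = a := by simpa using hlamA 0
        simp [e0]
        linarith
      · obtain ⟨k, rfl⟩ : ∃ k, m = k + 1 := ⟨m - 1, by omega⟩
        have e : n + 1 = (2 * k + 2) + 1 := by omega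
        rw [e, Finset.sum_range_succ, Finset.sum_range_succ (fun j => r ^ j), hodd k]
        have ea : lam (2 * k + 2) = a := by
          have := hlamA (k + 1); rwa [show 2 * (k + 1) = 2 * k + 2 by ring] at this
        rw [ea, mul_add]
        have : a * r ^ (2 * k + 2) ≤ L * r ^ (2 * k + 2) :=
          mul_le_mul_of_nonneg_right haL.le (pow_nonneg hr0.le _)
        linarith
    · -- n = 2m+1 odd
      have e : n + 1 = 2 * m + 2 := by omega
      rw [e, hodd m]
  set f : ℕ → ℝ := fun n =>
    (∑ j ∈ range (n + 1), lam j * r ^ j) / (∑ j ∈ range (n + 1), r ^ j) with hfdef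
  have fle : ∀ n, f n ≤ L := by
    intro n
    rw [hfdef]
    exact div_le_of_le_mul₀ (hD n).le (ha.trans haL).le (by have := hle n; linarith)
  have fnn : ∀ n, 0 ≤ f n := by
    intro n
    apply div_nonneg _ (hD n).le
    apply Finset.sum_nonneg
    intro j _
    have : 0 < lam j := by rw [hlam]; split <;> linarith
    positivity
  have feq : ∀ m : ℕ, f (2 * m + 1) = L := by
    intro m
    rw [hfdef]
    simp only
    rw [show 2 * m + 1 + 1 = 2 * m + 2 by ring, hodd m,
      mul_div_assoc, div_self (by have := hD (2 * m + 1); rw [show 2*m+1+1 = 2*m+2 by ring] at this; exact this.ne'), mul_one]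
  have hfreqL : ∃ᶠ n in atTop, L ≤ f n := by
    rw [frequently_atTop]
    intro N
    exact ⟨2 * N + 1, by omega, (feq N).ge⟩
  have hlimsup : limsup f atTop = L := by
    apply le_antisymm
    · exact limsup_le_of_le (isCoboundedUnder_le_of_le atTop fnn) (Eventually.of_forall fle)
    · exact le_limsup_of_frequently_le hfreqL (isBoundedUnder_of ⟨L, fle⟩)
  have hLeq : L = (mu1 * b + mu2 * a) / (mu1 + mu2) := by
    rw [hLdef, hrdef]
    have h12 : (0:ℝ) < mu1 + mu2 := by linarith
    have hrm : r * mu2 = mu1 := div_mul_cancel₀ mu1 hmu2.ne'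
    rw [div_eq_div_iff h1r.ne' h12.ne']
    linear_combination (b - a) * hrm
  refine ⟨?_, hlimsup.trans hLeq, hlimsup ▸ haL⟩
  -- liminf lam = a
  have hlo : ∀ n, a ≤ lam n := by intro n; rw [hlam]; split <;> linarith
  have hhi : ∀ n, lam n ≤ b := by intro n; rw [hlam]; split <;> linarith
  apply le_antisymm
  · apply liminf_le_of_frequently_le _ (isBoundedUnder_of ⟨a, fun n => hlo n⟩)
    rw [frequently_atTop]
    intro N
    exact ⟨2 * N, by omega, (hlamA N).le⟩
  · refine le_liminf_of_le (isCoboundedUnder_ge_of_le atTop hhi) ?_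
    exact Eventually.of_forall hlo
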